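/- Let R = (<₁, <₂, <₃) be a standard representation of a finite set V with |V| ≥ 3, with <ᵢ-maximum elements a₁, a₂, a₃. If w and w' are two distinct neighbors of a₁ in Σ₂(R), then w <₂ w' if and only if w' <₃ w. (Equivalently, the <₂-increasing order on the neighbors of a₁ is the <₃-decreasing order.) -/

import Mathlib

open SimpleGraph

variable {V : Type*}

/-- The graph Σ₂(R) for a triple of linear orders R = (l₁, l₂, l₃) on V:
`x` and `y` are adjacent iff every other vertex `z` lies above both `x` and `y`
in one of the three orders. -/
def Sigma2 (l₁ l₂ l₃ : LinearOrder V) : SimpleGraph V where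
  Adj x y := x ≠ y ∧ ∀ z, z ≠ x → z ≠ y →
    (l₁.lt x z ∧ l₁.lt y z) ∨ (l₂.lt x z ∧ l₂.lt y z) ∨ (l₃.lt x z ∧ l₃.lt y z)
  symm := ⟨by
    rintro x y ⟨hxy, h⟩
    exact ⟨hxy.symm, fun z hzy hzx => by rcases h z hzx hzy with h|h|h <;> tauto⟩⟩
  loopless := ⟨fun x h => h.1 rfl⟩

/-- The three orders have empty intersection: for distinct x, y, some order has x below y. -/
def IsRep (l₁ l₂ l₃ : LinearOrder V) : Prop :=
  ∀ x y : V, x ≠ y → l₁.lt x y ∨ l₂.lt x y ∨ l₃.lt x y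

/-- `a` is the maximum element of the linear order `l`. -/
def IsMaxOf (l : LinearOrder V) (a : V) : Prop := ∀ x, x ≠ a → l.lt x a

/-- `a` is among the two smallest elements of `l`: at most one element lies below `a`. -/
def AmongTwoSmallest (l : LinearOrder V) (a : V) : Prop :=
  ∀ x y, l.lt x a → l.lt y a → x = y

/-- `R = (l₁, l₂, l₃)` is a standard representation with `<ᵢ`-maxima `a₁, a₂, a₃`. -/
structure IsStdRep (l₁ l₂ l₃ : LinearOrder V) (a₁ a₂ a₃ : V) : Prop where
  rep : IsRep l₁ l₂ l₃
  top₁ : IsMaxOf l₁ a₁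
  top₂ : IsMaxOf l₂ a₂
  top₃ : IsMaxOf l₃ a₃
  a₁_small₂ : AmongTwoSmallest l₂ a₁
  a₁_small₃ : AmongTwoSmallest l₃ a₁
  a₂_small₁ : AmongTwoSmallest l₁ a₂
  a₂_small₃ : AmongTwoSmallest l₃ a₂
  a₃_small₁ : AmongTwoSmallest l₁ a₃
  a₃_small₂ : AmongTwoSmallest l₂ a₃

/-- The restriction of a linear order on `V` to `V \ {b}`. -/
def restrictOrder (l : LinearOrder V) (b : V) : LinearOrder {x : V // x ≠ b} :=
  @LinearOrder.lift' _ _ l Subtype.val Subtype.val_injective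

/-- For two distinct neighbors w, w' of a₁ in Σ₂(R),
w <₂ w' iff w' <₃ w. -/
theorem stmt1 {V : Type*} [Fintype V] (hV : 3 ≤ Fintype.card V)
    (l₁ l₂ l₃ : LinearOrder V) (a₁ a₂ a₃ : V)
    (hR : IsStdRep l₁ l₂ l₃ a₁ a₂ a₃)
    (w w' : V) (hw : (Sigma2 l₁ l₂ l₃).Adj a₁ w) (hw' : (Sigma2 l₁ l₂ l₃).Adj a₁ w')
    (hne : w ≠ w') :
    l₂.lt w w' ↔ l₃.lt w' w := by
  have hwa : w ≠ a₁ := hw.1.symm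
  have hwa' : w' ≠ a₁ := hw'.1.symm
  -- apply adjacency of w' at z = w
  have h1 := hw'.2 w hwa hne
  -- apply adjacency of w at z = w'
  have h2 := hw.2 w' hwa' hne.symm
  have asym2 : ∀ x y : V, l₂.lt x y → ¬ l₂.lt y x := fun x y =>
    @lt_asymm V l₂.toPartialOrder.toPreorder x y
  have asym3 : ∀ x y : V, l₃.lt x y → ¬ l₃.lt y x := fun x y =>
    @lt_asymm V l₃.toPartialOrder.toPreorder x y
  have hna1 : ∀ x : V, x ≠ a₁ → ¬ l₁.lt a₁ x := fun x hx h =>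
    @lt_asymm V l₁.toPartialOrder.toPreorder _ _ h (hR.top₁ x hx)
  constructor
  · intro h2lt
    rcases h1 with ⟨h, _⟩ | ⟨_, h⟩ | ⟨_, h⟩
    · exact absurd h (hna1 w hwa)
    · exact absurd h2lt (asym2 _ _ h)
    · exact h
  · intro h3lt
    rcases h2 with ⟨h, _⟩ | ⟨_, h⟩ | ⟨_, h⟩
    · exact absurd h (hna1 w' hwa')
    · exact h
    · exact absurd h3lt (asym3 _ _ h)
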